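/- Suppose every unit square with center in the lexicographic box is assigned occupied/vacant states and C⁺(0) is a finite plus connected occupied component. If P = (J₁,…,J_t) is a path of plus adjacent occupied squares of C⁺(0) and Γ is a cycle of grid edges such that every edge of Γ belongs to some vacant square, then either all squares of P lie in the interior of Γ or all lie in the exterior of Γ. -/

import Mathlib

open Set

/-- The closed unit square with lower-left corner `q` of the standard tiling. -/
def unitSquare (q : ℤ × ℤ) : Set (ℝ × ℝ) :=
  Icc (q.1 : ℝ) (q.1 + 1) ×ˢ Icc (q.2 : ℝ) (q.2 + 1)

/-- The open interior of the unit square `q`. -/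
def openSquare (q : ℤ × ℤ) : Set (ℝ × ℝ) :=
  Ioo (q.1 : ℝ) (q.1 + 1) ×ˢ Ioo (q.2 : ℝ) (q.2 + 1)

/-- The four corner points of the unit square `q`. -/
def cornerSet (q : ℤ × ℤ) : Set (ℝ × ℝ) :=
  {((q.1 : ℝ), (q.2 : ℝ)), ((q.1 : ℝ) + 1, (q.2 : ℝ)),
   ((q.1 : ℝ), (q.2 : ℝ) + 1), ((q.1 : ℝ) + 1, (q.2 : ℝ) + 1)}

/-- The four closed boundary edges of the unit square `q`, as subsets of `ℝ × ℝ`. -/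
def squareEdgeSets (q : ℤ × ℤ) : Set (Set (ℝ × ℝ)) :=
  { Icc (q.1 : ℝ) (q.1 + 1) ×ˢ ({(q.2 : ℝ)} : Set ℝ),
    Icc (q.1 : ℝ) (q.1 + 1) ×ˢ ({(q.2 : ℝ) + 1} : Set ℝ),
    ({(q.1 : ℝ)} : Set ℝ) ×ˢ Icc (q.2 : ℝ) (q.2 + 1),
    ({(q.1 : ℝ) + 1} : Set ℝ) ×ˢ Icc (q.2 : ℝ) (q.2 + 1) }

/-- Two distinct squares are star adjacent if they share a corner. -/
def StarAdj (p q : ℤ × ℤ) : Prop := p ≠ q ∧ (cornerSet p ∩ cornerSet q).Nonempty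

/-- Two distinct squares are plus adjacent if they share a full edge. -/
def PlusAdj (p q : ℤ × ℤ) : Prop := p ≠ q ∧ (squareEdgeSets p ∩ squareEdgeSets q).Nonempty

/-- The grid graph on `ℤ × ℤ`: edges between lattice points at distance 1. -/
def gridGraph : SimpleGraph (ℤ × ℤ) where
  Adj p q := |p.1 - q.1| + |p.2 - q.2| = 1
  symm := by
    constructor
    intro p q h
    show |q.1 - p.1| + |q.2 - p.2| = 1
    rw [abs_sub_comm q.1, abs_sub_comm q.2]
    exact h
  loopless := by
    constructor
    intro p h
    simp at h

/-- Embedding of lattice points into the plane. -/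
def toR (p : ℤ × ℤ) : ℝ × ℝ := ((p.1 : ℝ), (p.2 : ℝ))

/-- The subset of the plane traced out by a closed walk in the grid graph. -/
def cycleSet {v : ℤ × ℤ} (w : gridGraph.Walk v v) : Set (ℝ × ℝ) :=
  ⋃ d ∈ w.darts, segment ℝ (toR d.toProd.1) (toR d.toProd.2)

/-- The interior of a curve `Γ`: points off `Γ` whose connected component
of the complement is bounded. -/
def interiorPts (Γ : Set (ℝ × ℝ)) : Set (ℝ × ℝ) :=
  {x | x ∉ Γ ∧ Bornology.IsBounded (connectedComponentIn Γᶜ x)}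

/-- The exterior of a curve `Γ`: points off `Γ` whose connected component
of the complement is unbounded. -/
def exteriorPts (Γ : Set (ℝ × ℝ)) : Set (ℝ × ℝ) :=
  {x | x ∉ Γ ∧ ¬ Bornology.IsBounded (connectedComponentIn Γᶜ x)}

/-- A square lies in the interior of a curve if its open interior does. -/
def SquareInInterior (Γ : Set (ℝ × ℝ)) (q : ℤ × ℤ) : Prop := openSquare q ⊆ interiorPts Γ

/-- A square lies in the exterior of a curve if its open interior does. -/
def SquareInExterior (Γ : Set (ℝ × ℝ)) (q : ℤ × ℤ) : Prop := openSquare q ⊆ exteriorPts Γ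

/-- The four boundary edges of the square `q`, as edges (`Sym2`) of the grid graph. -/
def sqEdgeSyms (q : ℤ × ℤ) : Set (Sym2 (ℤ × ℤ)) :=
  { s((q.1, q.2), (q.1 + 1, q.2)),
    s((q.1, q.2), (q.1, q.2 + 1)),
    s((q.1 + 1, q.2), (q.1 + 1, q.2 + 1)),
    s((q.1, q.2 + 1), (q.1 + 1, q.2 + 1)) }

/-- A cycle in the graph `G₀` of edges of the squares of `Λ`. -/
def CycleInG0 (Λ : Set (ℤ × ℤ)) {v : ℤ × ℤ} (w : gridGraph.Walk v v) : Prop :=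
  w.IsCycle ∧ ∀ e ∈ w.edges, ∃ q ∈ Λ, e ∈ sqEdgeSyms q

/-- An outermost boundary edge of the component formed by the squares of `Λ`. -/
def OutermostBoundaryEdge (Λ : Set (ℤ × ℤ)) (e : Sym2 (ℤ × ℤ)) : Prop :=
  (∃ q ∈ Λ, e ∈ sqEdgeSyms q) ∧
  ∀ (v : ℤ × ℤ) (w : gridGraph.Walk v v), CycleInG0 Λ w →
    e ∈ w.edges ∨ ∀ q : ℤ × ℤ, e ∈ sqEdgeSyms q → SquareInExterior (cycleSet w) q

/-! ### Auxiliary lemmas -/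

/-- The center of the unit square `q`. -/
noncomputable def ctr (q : ℤ × ℤ) : ℝ × ℝ := ((q.1 : ℝ) + 2⁻¹, (q.2 : ℝ) + 2⁻¹)

lemma ctr_mem_openSquare (q : ℤ × ℤ) : ctr q ∈ openSquare q := by
  constructor <;> constructor <;> simp [ctr] <;> norm_num

lemma H_eq_H {a c a' c' : ℝ} (h : Icc a (a+1) ×ˢ ({c} : Set ℝ) = Icc a' (a'+1) ×ˢ ({c'} : Set ℝ)) :
    a = a' ∧ c = c' := by
  have h1 : ((a, c) : ℝ × ℝ) ∈ Icc a' (a'+1) ×ˢ ({c'} : Set ℝ) := by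
    rw [← h]; refine ⟨⟨le_refl a, by linarith⟩, rfl⟩
  have h2 : ((a', c') : ℝ × ℝ) ∈ Icc a (a+1) ×ˢ ({c} : Set ℝ) := by
    rw [h]; refine ⟨⟨le_refl a', by linarith⟩, rfl⟩
  obtain ⟨⟨hb1, _⟩, hc1⟩ := h1
  obtain ⟨⟨hb2, _⟩, _⟩ := h2
  exact ⟨le_antisymm hb2 hb1, hc1⟩

lemma V_eq_V {a c a' c' : ℝ} (h : ({a} : Set ℝ) ×ˢ Icc c (c+1) = ({a'} : Set ℝ) ×ˢ Icc c' (c'+1)) :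
    a = a' ∧ c = c' := by
  have h1 : ((a, c) : ℝ × ℝ) ∈ ({a'} : Set ℝ) ×ˢ Icc c' (c'+1) := by
    rw [← h]; exact ⟨rfl, ⟨le_refl c, by linarith⟩⟩
  have h2 : ((a', c') : ℝ × ℝ) ∈ ({a} : Set ℝ) ×ˢ Icc c (c+1) := by
    rw [h]; exact ⟨rfl, ⟨le_refl c', by linarith⟩⟩
  have e1 : a = a' := h1.1
  have e2 : c' ≤ a ∨ True := Or.inr trivial
  exact ⟨e1, le_antisymm h2.2.1 h1.2.1⟩

lemma H_ne_V {a c a' c' : ℝ} :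
    Icc a (a+1) ×ˢ ({c} : Set ℝ) ≠ ({a'} : Set ℝ) ×ˢ Icc c' (c'+1) := by
  intro h
  have h1 : ((a, c) : ℝ × ℝ) ∈ ({a'} : Set ℝ) ×ˢ Icc c' (c'+1) := by
    rw [← h]; exact ⟨⟨le_refl a, by linarith⟩, rfl⟩
  have h2 : ((a+1, c) : ℝ × ℝ) ∈ ({a'} : Set ℝ) ×ˢ Icc c' (c'+1) := by
    rw [← h]; exact ⟨⟨by show a ≤ a + 1; linarith, by show (a:ℝ) + 1 ≤ a + 1; exact le_refl _⟩, rfl⟩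
  have e1 : a = a' := h1.1
  have e2 : a + 1 = a' := h2.1
  linarith

lemma plusAdj_cases {p q : ℤ × ℤ} (h : PlusAdj p q) :
    (q.1 = p.1 + 1 ∧ q.2 = p.2) ∨ (q.1 = p.1 - 1 ∧ q.2 = p.2) ∨
    (q.1 = p.1 ∧ q.2 = p.2 + 1) ∨ (q.1 = p.1 ∧ q.2 = p.2 - 1) := by
  obtain ⟨hne, S, hSp, hSq⟩ := h
  have hne' : ¬ (p.1 = q.1 ∧ p.2 = q.2) := by
    intro ⟨h1, h2⟩; exact hne (Prod.ext h1 h2)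
  simp only [squareEdgeSets, mem_insert_iff, mem_singleton_iff] at hSp hSq
  rcases hSp with rfl | rfl | rfl | rfl <;> rcases hSq with h' | h' | h' | h' <;>
  first
  | exact absurd h' H_ne_V
  | exact absurd h'.symm H_ne_V
  | (obtain ⟨e1, e2⟩ := H_eq_H h'
     have i1 : p.1 = q.1 := by exact_mod_cast e1
     have i2 : p.2 = q.2 ∨ p.2 = q.2 + 1 ∨ p.2 + 1 = q.2 ∨ p.2 + 1 = q.2 + 1 := by
       first
       | exact Or.inl (by exact_mod_cast e2)
       | exact Or.inr (Or.inl (by exact_mod_cast e2))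
       | exact Or.inr (Or.inr (Or.inl (by exact_mod_cast e2)))
       | exact Or.inr (Or.inr (Or.inr (by exact_mod_cast e2)))
     omega)
  | (obtain ⟨e1, e2⟩ := V_eq_V h'
     have i2 : p.2 = q.2 := by exact_mod_cast e2
     have i1 : p.1 = q.1 ∨ p.1 = q.1 + 1 ∨ p.1 + 1 = q.1 ∨ p.1 + 1 = q.1 + 1 := by
       first
       | exact Or.inl (by exact_mod_cast e1)
       | exact Or.inr (Or.inl (by exact_mod_cast e1))
       | exact Or.inr (Or.inr (Or.inl (by exact_mod_cast e1)))
       | exact Or.inr (Or.inr (Or.inr (by exact_mod_cast e1)))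
     omega)

lemma gridAdj_cases {a b : ℤ × ℤ} (h : gridGraph.Adj a b) :
    (a.1 = b.1 ∧ (a.2 = b.2 + 1 ∨ b.2 = a.2 + 1)) ∨
    (a.2 = b.2 ∧ (a.1 = b.1 + 1 ∨ b.1 = a.1 + 1)) := by
  have h' : |a.1 - b.1| + |a.2 - b.2| = 1 := h
  rcases abs_cases (a.1 - b.1) with ⟨e1, _⟩ | ⟨e1, _⟩ <;>
    rcases abs_cases (a.2 - b.2) with ⟨e2, _⟩ | ⟨e2, _⟩ <;> omega

/-- Any point of a grid segment lies on a vertical or horizontal unit grid edge. -/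
lemma segment_cases {a b : ℤ × ℤ} (hab : gridGraph.Adj a b) {x : ℝ × ℝ}
    (hx : x ∈ segment ℝ (toR a) (toR b)) :
    (∃ m : ℤ, x.1 = (a.1 : ℝ) ∧ a.1 = b.1 ∧
      ((a.2 = m ∧ b.2 = m + 1) ∨ (b.2 = m ∧ a.2 = m + 1)) ∧ (m : ℝ) ≤ x.2 ∧ x.2 ≤ m + 1) ∨
    (∃ m : ℤ, x.2 = (a.2 : ℝ) ∧ a.2 = b.2 ∧
      ((a.1 = m ∧ b.1 = m + 1) ∨ (b.1 = m ∧ a.1 = m + 1)) ∧ (m : ℝ) ≤ x.1 ∧ x.1 ≤ m + 1) := by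
  obtain ⟨u, v, hu, hv, huv, hxe⟩ := hx
  have hu1 : u ≤ 1 := by linarith
  have hv1 : v ≤ 1 := by linarith
  have h1 : u * (a.1 : ℝ) + v * (b.1 : ℝ) = x.1 := by
    simpa [toR] using congrArg Prod.fst hxe
  have h2 : u * (a.2 : ℝ) + v * (b.2 : ℝ) = x.2 := by
    simpa [toR] using congrArg Prod.snd hxe
  rcases gridAdj_cases hab with ⟨e, hcc⟩ | ⟨e, hcc⟩
  · left
    have er : (a.1 : ℝ) = (b.1 : ℝ) := by exact_mod_cast e
    have hx1 : x.1 = (a.1 : ℝ) := by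
      linear_combination -h1 - v * er + (a.1 : ℝ) * huv
    rcases hcc with hc | hc
    · -- a.2 = b.2 + 1, take m = b.2
      have hcr : (a.2 : ℝ) = (b.2 : ℝ) + 1 := by exact_mod_cast hc
      have hx2 : x.2 = (b.2 : ℝ) + u := by
        linear_combination -h2 + u * hcr + (b.2 : ℝ) * huv
      exact ⟨b.2, hx1, e, Or.inr ⟨rfl, hc⟩, by rw [hx2]; linarith, by rw [hx2]; linarith⟩
    · -- b.2 = a.2 + 1, take m = a.2
      have hcr : (b.2 : ℝ) = (a.2 : ℝ) + 1 := by exact_mod_cast hc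
      have hx2 : x.2 = (a.2 : ℝ) + v := by
        linear_combination -h2 + v * hcr + (a.2 : ℝ) * huv
      exact ⟨a.2, hx1, e, Or.inl ⟨rfl, hc⟩, by rw [hx2]; linarith, by rw [hx2]; linarith⟩
  · right
    have er : (a.2 : ℝ) = (b.2 : ℝ) := by exact_mod_cast e
    have hx2 : x.2 = (a.2 : ℝ) := by
      linear_combination -h2 - v * er + (a.2 : ℝ) * huv
    rcases hcc with hc | hc
    · have hcr : (a.1 : ℝ) = (b.1 : ℝ) + 1 := by exact_mod_cast hc
      have hx1 : x.1 = (b.1 : ℝ) + u := by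
        linear_combination -h1 + u * hcr + (b.1 : ℝ) * huv
      exact ⟨b.1, hx2, e, Or.inr ⟨rfl, hc⟩, by rw [hx1]; linarith, by rw [hx1]; linarith⟩
    · have hcr : (b.1 : ℝ) = (a.1 : ℝ) + 1 := by exact_mod_cast hc
      have hx1 : x.1 = (a.1 : ℝ) + v := by
        linear_combination -h1 + v * hcr + (a.1 : ℝ) * huv
      exact ⟨a.1, hx2, e, Or.inl ⟨rfl, hc⟩, by rw [hx1]; linarith, by rw [hx1]; linarith⟩

lemma mem_cycleSet_iff {v : ℤ × ℤ} {w : gridGraph.Walk v v} {x : ℝ × ℝ} :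
    x ∈ cycleSet w ↔ ∃ d ∈ w.darts, x ∈ segment ℝ (toR d.toProd.1) (toR d.toProd.2) := by
  simp [cycleSet]

/-- Open squares do not meet the cycle set. -/
lemma openSquare_disjoint_cycleSet {v : ℤ × ℤ} (w : gridGraph.Walk v v) (r : ℤ × ℤ)
    {x : ℝ × ℝ} (hx : x ∈ openSquare r) : x ∉ cycleSet w := by
  intro hmem
  rw [mem_cycleSet_iff] at hmem
  obtain ⟨d, _, hseg⟩ := hmem
  obtain ⟨⟨hx1, hx1'⟩, ⟨hx2, hx2'⟩⟩ := hx
  rcases segment_cases d.adj hseg with ⟨m, he, _, _, _, _⟩ | ⟨m, he, _, _, _, _⟩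
  · rw [he] at hx1 hx1'
    have l1 : r.1 < d.toProd.1.1 := by exact_mod_cast hx1
    have l2 : (d.toProd.1.1 : ℝ) < (r.1 : ℝ) + 1 := hx1'
    have l2' : d.toProd.1.1 < r.1 + 1 := by exact_mod_cast l2
    omega
  · rw [he] at hx2 hx2'
    have l1 : r.2 < d.toProd.1.2 := by exact_mod_cast hx2
    have l2 : (d.toProd.1.2 : ℝ) < (r.2 : ℝ) + 1 := hx2'
    have l2' : d.toProd.1.2 < r.2 + 1 := by exact_mod_cast l2
    omega

lemma dart_edge_mem_edges {v : ℤ × ℤ} {w : gridGraph.Walk v v} {d : gridGraph.Dart}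
    (hd : d ∈ w.darts) : d.edge ∈ w.edges :=
  List.mem_map_of_mem hd

/-- Points of an open vertical grid edge whose edge is not on the cycle avoid the cycle set. -/
lemma vert_edge_disjoint {v : ℤ × ℤ} (w : gridGraph.Walk v v) (c m : ℤ)
    (hne : s(((c, m) : ℤ × ℤ), ((c, m + 1) : ℤ × ℤ)) ∉ w.edges)
    {y : ℝ} (h1 : (m : ℝ) < y) (h2 : y < (m : ℝ) + 1) :
    ((c : ℝ), y) ∉ cycleSet w := by
  intro hmem
  rw [mem_cycleSet_iff] at hmem
  obtain ⟨d, hd, hseg⟩ := hmem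
  rcases segment_cases d.adj hseg with ⟨m', he, hab, hmm, hl, hr⟩ | ⟨m', he, _, _, _, _⟩
  · -- vertical segment
    have he' : (c : ℝ) = (d.toProd.1.1 : ℝ) := he
    have hc : d.toProd.1.1 = c := by exact_mod_cast he'.symm
    have hm : m' = m := by
      have u1 : (m' : ℝ) < (m : ℝ) + 1 := lt_of_le_of_lt hl h2
      have u2 : (m : ℝ) < (m' : ℝ) + 1 := lt_of_lt_of_le h1 hr
      have u1' : m' < m + 1 := by exact_mod_cast u1
      have u2' : m < m' + 1 := by exact_mod_cast u2
      omega
    rw [hm] at hmm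
    apply hne
    have : d.edge = s(((c, m) : ℤ × ℤ), ((c, m + 1) : ℤ × ℤ)) := by
      show s(d.toProd.1, d.toProd.2) = _
      rcases hmm with ⟨ha, hb⟩ | ⟨hb, ha⟩
      · rw [show d.toProd.1 = ((c, m) : ℤ × ℤ) from Prod.ext hc ha,
          show d.toProd.2 = ((c, m + 1) : ℤ × ℤ) from Prod.ext (hab ▸ hc) hb]
      · rw [show d.toProd.1 = ((c, m + 1) : ℤ × ℤ) from Prod.ext hc ha,
          show d.toProd.2 = ((c, m) : ℤ × ℤ) from Prod.ext (hab ▸ hc) hb]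
        exact Sym2.eq_swap
    rw [← this]
    exact dart_edge_mem_edges hd
  · -- horizontal segment: second coordinate of x is an integer, contradiction
    have l1 : (m : ℝ) < (d.toProd.1.2 : ℝ) := he ▸ h1
    have l2 : ((d.toProd.1.2 : ℤ) : ℝ) < (m : ℝ) + 1 := he ▸ h2
    have l1' : m < d.toProd.1.2 := by exact_mod_cast l1
    have l2' : d.toProd.1.2 < m + 1 := by exact_mod_cast l2
    omega

/-- Points of an open horizontal grid edge whose edge is not on the cycle avoid the cycle set. -/
lemma horiz_edge_disjoint {v : ℤ × ℤ} (w : gridGraph.Walk v v) (m c : ℤ)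
    (hne : s(((m, c) : ℤ × ℤ), ((m + 1, c) : ℤ × ℤ)) ∉ w.edges)
    {y : ℝ} (h1 : (m : ℝ) < y) (h2 : y < (m : ℝ) + 1) :
    (y, (c : ℝ)) ∉ cycleSet w := by
  intro hmem
  rw [mem_cycleSet_iff] at hmem
  obtain ⟨d, hd, hseg⟩ := hmem
  rcases segment_cases d.adj hseg with ⟨m', he, _, _, _, _⟩ | ⟨m', he, hab, hmm, hl, hr⟩
  · have l1 : (m : ℝ) < (d.toProd.1.1 : ℝ) := he ▸ h1
    have l2 : ((d.toProd.1.1 : ℤ) : ℝ) < (m : ℝ) + 1 := he ▸ h2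
    have l1' : m < d.toProd.1.1 := by exact_mod_cast l1
    have l2' : d.toProd.1.1 < m + 1 := by exact_mod_cast l2
    omega
  · have he' : (c : ℝ) = (d.toProd.1.2 : ℝ) := he
    have hc : d.toProd.1.2 = c := by exact_mod_cast he'.symm
    have hm : m' = m := by
      have u1 : (m' : ℝ) < (m : ℝ) + 1 := lt_of_le_of_lt hl h2
      have u2 : (m : ℝ) < (m' : ℝ) + 1 := lt_of_lt_of_le h1 hr
      have u1' : m' < m + 1 := by exact_mod_cast u1
      have u2' : m < m' + 1 := by exact_mod_cast u2
      omega
    rw [hm] at hmm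
    apply hne
    have : d.edge = s(((m, c) : ℤ × ℤ), ((m + 1, c) : ℤ × ℤ)) := by
      show s(d.toProd.1, d.toProd.2) = _
      rcases hmm with ⟨ha, hb⟩ | ⟨hb, ha⟩
      · rw [show d.toProd.1 = ((m, c) : ℤ × ℤ) from Prod.ext ha hc,
          show d.toProd.2 = ((m + 1, c) : ℤ × ℤ) from Prod.ext hb (hab ▸ hc)]
      · rw [show d.toProd.1 = ((m + 1, c) : ℤ × ℤ) from Prod.ext ha hc,
          show d.toProd.2 = ((m, c) : ℤ × ℤ) from Prod.ext hb (hab ▸ hc)]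
        exact Sym2.eq_swap
    rw [← this]
    exact dart_edge_mem_edges hd

lemma openSquare_preconnected (q : ℤ × ℤ) : IsPreconnected (openSquare q) :=
  ((convex_Ioo _ _).prod (convex_Ioo _ _)).isPreconnected

lemma closure_openSquare (q : ℤ × ℤ) :
    closure (openSquare q) = Icc (q.1 : ℝ) (q.1 + 1) ×ˢ Icc (q.2 : ℝ) (q.2 + 1) := by
  unfold openSquare
  rw [closure_prod_eq, closure_Ioo (lt_add_one (q.1 : ℝ)).ne, closure_Ioo (lt_add_one (q.2 : ℝ)).ne]

lemma openSquare_subset_comp {v : ℤ × ℤ} (w : gridGraph.Walk v v) (q : ℤ × ℤ) :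
    openSquare q ⊆ connectedComponentIn (cycleSet w)ᶜ (ctr q) :=
  (openSquare_preconnected q).subset_connectedComponentIn (ctr_mem_openSquare q)
    (fun _ hx => openSquare_disjoint_cycleSet w q hx)

lemma square_in_interior_of_bounded {v : ℤ × ℤ} (w : gridGraph.Walk v v) (q : ℤ × ℤ)
    (h : Bornology.IsBounded (connectedComponentIn (cycleSet w)ᶜ (ctr q))) :
    SquareInInterior (cycleSet w) q := by
  intro z hz
  refine ⟨openSquare_disjoint_cycleSet w q hz, ?_⟩
  rwa [← connectedComponentIn_eq (openSquare_subset_comp w q hz)]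

lemma square_in_exterior_of_unbounded {v : ℤ × ℤ} (w : gridGraph.Walk v v) (q : ℤ × ℤ)
    (h : ¬ Bornology.IsBounded (connectedComponentIn (cycleSet w)ᶜ (ctr q))) :
    SquareInExterior (cycleSet w) q := by
  intro z hz
  refine ⟨openSquare_disjoint_cycleSet w q hz, ?_⟩
  rwa [← connectedComponentIn_eq (openSquare_subset_comp w q hz)]

/-- Two horizontally adjacent squares whose common edge is not on the cycle lie in the same
connected component of the complement. -/
lemma comp_eq_right {v : ℤ × ℤ} (w : gridGraph.Walk v v) (p : ℤ × ℤ)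
    (hp : s(((p.1 + 1, p.2) : ℤ × ℤ), ((p.1 + 1, p.2 + 1) : ℤ × ℤ)) ∉ w.edges) :
    connectedComponentIn (cycleSet w)ᶜ (ctr p) =
    connectedComponentIn (cycleSet w)ᶜ (ctr (p.1 + 1, p.2)) := by
  set q : ℤ × ℤ := (p.1 + 1, p.2) with hq
  set E : Set (ℝ × ℝ) := ({(p.1 : ℝ) + 1} : Set ℝ) ×ˢ Ioo (p.2 : ℝ) ((p.2 : ℝ) + 1) with hE
  have hEdisj : ∀ x ∈ E, x ∉ cycleSet w := by
    rintro ⟨x1, x2⟩ ⟨hx1, hx2⟩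
    have hx1' : x1 = ((p.1 + 1 : ℤ) : ℝ) := by push_cast; exact hx1
    rw [show ((x1, x2) : ℝ × ℝ) = (((p.1 + 1 : ℤ) : ℝ), x2) by rw [hx1']]
    exact vert_edge_disjoint w (p.1 + 1) p.2 hp hx2.1 hx2.2
  have hEp : E ⊆ closure (openSquare p) := by
    rw [closure_openSquare]
    rintro ⟨x1, x2⟩ ⟨hx1, hx2⟩
    have hx1' : x1 = (p.1 : ℝ) + 1 := hx1
    exact ⟨⟨by show (p.1 : ℝ) ≤ x1; rw [hx1']; linarith,
      by show x1 ≤ (p.1 : ℝ) + 1; rw [hx1']⟩, ⟨le_of_lt hx2.1, le_of_lt hx2.2⟩⟩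
  have hEq : E ⊆ closure (openSquare q) := by
    rw [closure_openSquare]
    rintro ⟨x1, x2⟩ ⟨hx1, hx2⟩
    have hx1' : x1 = (p.1 : ℝ) + 1 := hx1
    have hq1 : (q.1 : ℝ) = (p.1 : ℝ) + 1 := by rw [hq]; push_cast; ring
    have hq2 : (q.2 : ℝ) = (p.2 : ℝ) := by rw [hq]
    refine ⟨⟨?_, ?_⟩, ⟨?_, ?_⟩⟩
    · show (q.1 : ℝ) ≤ x1; rw [hx1', hq1]
    · show x1 ≤ (q.1 : ℝ) + 1; rw [hx1', hq1]; linarith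
    · show (q.2 : ℝ) ≤ x2; rw [hq2]; exact le_of_lt hx2.1
    · show x2 ≤ (q.2 : ℝ) + 1; rw [hq2]; exact le_of_lt hx2.2
  have hA : IsPreconnected (openSquare p ∪ E) :=
    (openSquare_preconnected p).subset_closure subset_union_left
      (union_subset subset_closure hEp)
  have hB : IsPreconnected (openSquare q ∪ E) :=
    (openSquare_preconnected q).subset_closure subset_union_left
      (union_subset subset_closure hEq)
  set e0 : ℝ × ℝ := ((p.1 : ℝ) + 1, (p.2 : ℝ) + 2⁻¹) with he0def
  have he0 : e0 ∈ E := by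
    refine ⟨rfl, ?_, ?_⟩ <;> · show (_ : ℝ) < _; rw [he0def]; norm_num
  have hU : IsPreconnected ((openSquare p ∪ E) ∪ (openSquare q ∪ E)) :=
    IsPreconnected.union e0 (mem_union_right _ he0) (mem_union_right _ he0) hA hB
  have hsub : (openSquare p ∪ E) ∪ (openSquare q ∪ E) ⊆ (cycleSet w)ᶜ := by
    rintro x ((hx | hx) | (hx | hx))
    · exact openSquare_disjoint_cycleSet w p hx
    · exact hEdisj x hx
    · exact openSquare_disjoint_cycleSet w q hx
    · exact hEdisj x hx
  have hsubc := hU.subset_connectedComponentIn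
    (mem_union_left _ (mem_union_left _ (ctr_mem_openSquare p))) hsub
  exact connectedComponentIn_eq
    (hsubc (mem_union_right _ (mem_union_left _ (ctr_mem_openSquare q))))

/-- Two vertically adjacent squares whose common edge is not on the cycle lie in the same
connected component of the complement. -/
lemma comp_eq_up {v : ℤ × ℤ} (w : gridGraph.Walk v v) (p : ℤ × ℤ)
    (hp : s(((p.1, p.2 + 1) : ℤ × ℤ), ((p.1 + 1, p.2 + 1) : ℤ × ℤ)) ∉ w.edges) :
    connectedComponentIn (cycleSet w)ᶜ (ctr p) =
    connectedComponentIn (cycleSet w)ᶜ (ctr (p.1, p.2 + 1)) := by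
  set q : ℤ × ℤ := (p.1, p.2 + 1) with hq
  set E : Set (ℝ × ℝ) := Ioo (p.1 : ℝ) ((p.1 : ℝ) + 1) ×ˢ ({(p.2 : ℝ) + 1} : Set ℝ) with hE
  have hEdisj : ∀ x ∈ E, x ∉ cycleSet w := by
    rintro ⟨x1, x2⟩ ⟨hx1, hx2⟩
    have hx2' : x2 = ((p.2 + 1 : ℤ) : ℝ) := by push_cast; exact hx2
    rw [show ((x1, x2) : ℝ × ℝ) = (x1, ((p.2 + 1 : ℤ) : ℝ)) by rw [hx2']]
    exact horiz_edge_disjoint w p.1 (p.2 + 1) hp hx1.1 hx1.2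
  have hEp : E ⊆ closure (openSquare p) := by
    rw [closure_openSquare]
    rintro ⟨x1, x2⟩ ⟨hx1, hx2⟩
    have hx2' : x2 = (p.2 : ℝ) + 1 := hx2
    exact ⟨⟨le_of_lt hx1.1, le_of_lt hx1.2⟩, ⟨by show (p.2 : ℝ) ≤ x2; rw [hx2']; linarith,
      by show x2 ≤ (p.2 : ℝ) + 1; rw [hx2']⟩⟩
  have hEq : E ⊆ closure (openSquare q) := by
    rw [closure_openSquare]
    rintro ⟨x1, x2⟩ ⟨hx1, hx2⟩
    have hx2' : x2 = (p.2 : ℝ) + 1 := hx2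
    have hq1 : (q.1 : ℝ) = (p.1 : ℝ) := by rw [hq]
    have hq2 : (q.2 : ℝ) = (p.2 : ℝ) + 1 := by rw [hq]; push_cast; ring
    refine ⟨⟨?_, ?_⟩, ⟨?_, ?_⟩⟩
    · show (q.1 : ℝ) ≤ x1; rw [hq1]; exact le_of_lt hx1.1
    · show x1 ≤ (q.1 : ℝ) + 1; rw [hq1]; exact le_of_lt hx1.2
    · show (q.2 : ℝ) ≤ x2; rw [hx2', hq2]
    · show x2 ≤ (q.2 : ℝ) + 1; rw [hx2', hq2]; linarith
  have hA : IsPreconnected (openSquare p ∪ E) :=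
    (openSquare_preconnected p).subset_closure subset_union_left
      (union_subset subset_closure hEp)
  have hB : IsPreconnected (openSquare q ∪ E) :=
    (openSquare_preconnected q).subset_closure subset_union_left
      (union_subset subset_closure hEq)
  set e0 : ℝ × ℝ := ((p.1 : ℝ) + 2⁻¹, (p.2 : ℝ) + 1) with he0def
  have he0 : e0 ∈ E := by
    refine ⟨⟨?_, ?_⟩, rfl⟩ <;> · show (_ : ℝ) < _; rw [he0def]; norm_num
  have hU : IsPreconnected ((openSquare p ∪ E) ∪ (openSquare q ∪ E)) :=
    IsPreconnected.union e0 (mem_union_right _ he0) (mem_union_right _ he0) hA hB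
  have hsub : (openSquare p ∪ E) ∪ (openSquare q ∪ E) ⊆ (cycleSet w)ᶜ := by
    rintro x ((hx | hx) | (hx | hx))
    · exact openSquare_disjoint_cycleSet w p hx
    · exact hEdisj x hx
    · exact openSquare_disjoint_cycleSet w q hx
    · exact hEdisj x hx
  have hsubc := hU.subset_connectedComponentIn
    (mem_union_left _ (mem_union_left _ (ctr_mem_openSquare p))) hsub
  exact connectedComponentIn_eq
    (hsubc (mem_union_right _ (mem_union_left _ (ctr_mem_openSquare q))))

lemma comp_eq_of_plusAdj {v : ℤ × ℤ} (w : gridGraph.Walk v v) {p q : ℤ × ℤ}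
    (h : PlusAdj p q) (hp : ∀ e ∈ sqEdgeSyms p, e ∉ w.edges) :
    connectedComponentIn (cycleSet w)ᶜ (ctr p) =
    connectedComponentIn (cycleSet w)ᶜ (ctr q) := by
  rcases plusAdj_cases h with ⟨h1, h2⟩ | ⟨h1, h2⟩ | ⟨h1, h2⟩ | ⟨h1, h2⟩
  · have := comp_eq_right w p (hp _ (by simp [sqEdgeSyms]))
    rwa [show ((p.1 + 1, p.2) : ℤ × ℤ) = q from Prod.ext h1.symm h2.symm] at this
  · have hedge : s(((q.1 + 1, q.2) : ℤ × ℤ), ((q.1 + 1, q.2 + 1) : ℤ × ℤ)) ∉ w.edges := by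
      have e1 : q.1 + 1 = p.1 := by omega
      rw [e1, h2]
      exact hp _ (by simp [sqEdgeSyms])
    have := (comp_eq_right w q hedge).symm
    rwa [show ((q.1 + 1, q.2) : ℤ × ℤ) = p from Prod.ext (by omega) h2] at this
  · have := comp_eq_up w p (hp _ (by simp [sqEdgeSyms]))
    rwa [show ((p.1, p.2 + 1) : ℤ × ℤ) = q from Prod.ext h1.symm h2.symm] at this
  · have hedge : s(((q.1, q.2 + 1) : ℤ × ℤ), ((q.1 + 1, q.2 + 1) : ℤ × ℤ)) ∉ w.edges := by
      have e2 : q.2 + 1 = p.2 := by omega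
      rw [e2, h1]
      exact hp _ (by simp [sqEdgeSyms])
    have := (comp_eq_up w q hedge).symm
    rwa [show ((q.1, q.2 + 1) : ℤ × ℤ) = p from Prod.ext h1 (by omega)] at this

theorem occupied_path_cannot_cross_vacant_cycle (occupied : ℤ × ℤ → Prop)
    (v : ℤ × ℤ) (wG : gridGraph.Walk v v) (hw : wG.IsCycle)
    (hvac : ∀ e ∈ wG.edges, ∀ q : ℤ × ℤ, e ∈ sqEdgeSyms q → ¬ occupied q)
    (t : ℕ) (J : Fin t → ℤ × ℤ) (hocc : ∀ i, occupied (J i))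
    (hadj : ∀ (i : ℕ) (h : i + 1 < t),
      PlusAdj (J ⟨i, by omega⟩) (J ⟨i + 1, h⟩)) :
    (∀ i, SquareInInterior (cycleSet wG) (J i)) ∨
    (∀ i, SquareInExterior (cycleSet wG) (J i)) := by
  rcases Nat.eq_zero_or_pos t with rfl | ht
  · left; intro i; exact i.elim0
  have hno : ∀ i : Fin t, ∀ e ∈ sqEdgeSyms (J i), e ∉ wG.edges := by
    intro i e he hew
    exact hvac e hew (J i) he (hocc i)
  have hcomp : ∀ n (hn : n < t),
      connectedComponentIn (cycleSet wG)ᶜ (ctr (J ⟨n, hn⟩)) =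
      connectedComponentIn (cycleSet wG)ᶜ (ctr (J ⟨0, ht⟩)) := by
    intro n
    induction n with
    | zero => intro hn; rfl
    | succ k ih =>
      intro hn
      have hk : k < t := by omega
      rw [← comp_eq_of_plusAdj wG (hadj k hn) (hno ⟨k, hk⟩)]
      exact ih hk
  by_cases hb : Bornology.IsBounded (connectedComponentIn (cycleSet wG)ᶜ (ctr (J ⟨0, ht⟩)))
  · left
    intro i
    exact square_in_interior_of_bounded wG (J i) (by rw [hcomp i.1 i.2]; exact hb)
  · right
    intro i
    exact square_in_exterior_of_unbounded wG (J i) (by rw [hcomp i.1 i.2]; exact hb)
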